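/- Let Γ be an infinite group with trivial center and let G = Γ × Γ act on Γ by left–right multiplication (g,h)·k = g k h⁻¹. Then for every (g,h) ∈ G with (g,h) ≠ (e,e), the set {k ∈ Γ | g k h⁻¹ ≠ k} is infinite. -/
import Mathlib


/-- if `Γ` is an infinite group with trivial center and `G = Γ × Γ` acts on `Γ`
by left-right multiplication `(g,h)·k = g k h⁻¹`, then for every `(g,h) ≠ (e,e)` the set
`{k ∈ Γ | g k h⁻¹ ≠ k}` is infinite. -/
theorem stmt_0 {Γ : Type*} [Group Γ] [Infinite Γ]
    (hZ : Subgroup.center Γ = ⊥) (g h : Γ) (hgh : (g, h) ≠ ((1 : Γ), (1 : Γ))) :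
    {k : Γ | g * k * h⁻¹ ≠ k}.Infinite := by
  by_contra hfin
  rw [Set.not_infinite] at hfin
  -- the fixed set has finite complement
  have hS : ({k : Γ | g * k * h⁻¹ = k}ᶜ).Finite := by
    exact hfin
  have key : ∀ x : Γ, ∃ k : Γ, g * k * h⁻¹ = k ∧ g * (x * k) * h⁻¹ = x * k := by
    intro x
    have h2 : ({k : Γ | g * (x * k) * h⁻¹ = x * k}ᶜ).Finite := by
      have := hS.preimage (f := fun k : Γ => x * k)
        (Function.Injective.injOn (mul_right_injective x))
      exact this
    have hinf : (({k : Γ | g * k * h⁻¹ = k}ᶜ ∪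
        {k : Γ | g * (x * k) * h⁻¹ = x * k}ᶜ)ᶜ).Infinite :=
      Set.Finite.infinite_compl (hS.union h2)
    obtain ⟨k, hk⟩ := hinf.nonempty
    simp only [Set.compl_union, Set.mem_inter_iff, Set.mem_compl_iff, Set.mem_setOf_eq,
      not_not, compl_compl] at hk
    exact ⟨k, hk.1, hk.2⟩
  have hg : g = 1 := by
    have hgmem : g ∈ Subgroup.center Γ := by
      rw [Subgroup.mem_center_iff]
      intro x
      obtain ⟨k, hk1, hk2⟩ := key x
      have e1 : g * k = k * h := mul_inv_eq_iff_eq_mul.mp hk1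
      have e2 : g * (x * k) = (x * k) * h := mul_inv_eq_iff_eq_mul.mp hk2
      have : (x * g) * k = (g * x) * k := by
        calc (x * g) * k = x * (g * k) := by group
          _ = x * (k * h) := by rw [e1]
          _ = (x * k) * h := by group
          _ = g * (x * k) := e2.symm
          _ = (g * x) * k := by group
      exact mul_right_cancel this
    rwa [hZ, Subgroup.mem_bot] at hgmem
  obtain ⟨k, hk1, -⟩ := key 1
  rw [hg, one_mul] at hk1
  have hh : h = 1 := by
    have : k * h⁻¹ = k * 1 := by rw [mul_one]; exact hk1
    have := mul_left_cancel this
    rwa [inv_eq_one] at this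
  exact hgh (by rw [hg, hh])
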